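/- arXiv:2303.01489 — 3 statements merged into one kernel-verified Lean document; each statement's English description precedes it below -/
import Mathlib

section
/- Let p ∈ (1,∞), T > 0, let φ : [0,T] → [0,∞) be continuous, and let G : [0,T] → (0,∞) be differentiable with G'(t) ≤ p φ(t) G(t)^{(p−1)/p} for all t ∈ [0,T]. Then G(t)^{1/p} ≤ G(0)^{1/p} + ∫₀ᵗ φ(s) ds for all t ∈ [0,T]. -/
open Set

theorem gronwall_power_inequality (p T : ℝ) (hp : 1 < p) (hT : 0 < T)
    (φ G G' : ℝ → ℝ)
    (hφcont : ContinuousOn φ (Set.Icc 0 T))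
    (hφnonneg : ∀ t ∈ Set.Icc (0:ℝ) T, 0 ≤ φ t)
    (hGpos : ∀ t ∈ Set.Icc (0:ℝ) T, 0 < G t)
    (hGdiff : ∀ t ∈ Set.Icc (0:ℝ) T, HasDerivWithinAt G (G' t) (Set.Icc 0 T) t)
    (hineq : ∀ t ∈ Set.Icc (0:ℝ) T, G' t ≤ p * φ t * G t ^ ((p - 1) / p)) :
    ∀ t ∈ Set.Icc (0:ℝ) T, G t ^ (1/p) ≤ G 0 ^ (1/p) + ∫ s in (0:ℝ)..t, φ s := by
  have hp0 : (0:ℝ) < p := lt_trans one_pos hp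
  set H : ℝ → ℝ := fun t => (∫ s in (0:ℝ)..t, φ s) - G t ^ (1/p) with hH
  have hIccmem : Set.Icc (0:ℝ) T = Set.uIcc 0 T := (Set.uIcc_of_le hT.le).symm
  have hφint : MeasureTheory.IntegrableOn φ (Set.uIcc 0 T) := by
    rw [← hIccmem]
    exact hφcont.integrableOn_compact isCompact_Icc
  have hGcont : ContinuousOn G (Set.Icc 0 T) := fun x hx =>
    (hGdiff x hx).continuousWithinAt
  have hHcont : ContinuousOn H (Set.Icc 0 T) := by
    apply ContinuousOn.sub
    · rw [hIccmem]; exact intervalIntegral.continuousOn_primitive_interval hφint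
    · exact hGcont.rpow_const fun x hx => Or.inl (hGpos x hx).ne'
  have hint : interior (Set.Icc (0:ℝ) T) = Set.Ioo 0 T := interior_Icc
  have hmono : MonotoneOn H (Set.Icc 0 T) := by
    apply monotoneOn_of_hasDerivWithinAt_nonneg (convex_Icc 0 T) hHcont
      (f' := fun x => φ x - G' x * (1/p) * G x ^ (1/p - 1))
    · intro x hx
      rw [hint] at hx ⊢
      have hxI : x ∈ Set.Icc (0:ℝ) T := Ioo_subset_Icc_self hx
      have hd1 : HasDerivAt (fun u => ∫ s in (0:ℝ)..u, φ s) (φ x) x := by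
        apply intervalIntegral.integral_hasDerivAt_right
        · apply ContinuousOn.intervalIntegrable
          apply hφcont.mono
          rw [hIccmem]
          exact Set.uIcc_subset_uIcc (Set.left_mem_uIcc)
            (by rw [← hIccmem]; exact hxI)
        · exact ⟨Set.Icc 0 T, Icc_mem_nhds hx.1 hx.2,
            hφcont.aestronglyMeasurable measurableSet_Icc⟩
        · exact (hφcont x hxI).continuousAt (Icc_mem_nhds hx.1 hx.2)
      have hd2 : HasDerivWithinAt (fun u => G u ^ (1/p))
          (G' x * (1/p) * G x ^ (1/p - 1)) (Set.Ioo 0 T) x :=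
        (((hGdiff x hxI).mono Ioo_subset_Icc_self).rpow_const
          (Or.inl (hGpos x hxI).ne'))
      exact (hd1.hasDerivWithinAt).sub hd2
    · intro x hx
      rw [hint] at hx
      have hxI : x ∈ Set.Icc (0:ℝ) T := Ioo_subset_Icc_self hx
      have hGx := hGpos x hxI
      have key : G' x * (1/p) * G x ^ (1/p - 1) ≤ φ x := by
        have h1 : G' x * ((1/p) * G x ^ (1/p - 1)) ≤
            (p * φ x * G x ^ ((p-1)/p)) * ((1/p) * G x ^ (1/p - 1)) := by
          apply mul_le_mul_of_nonneg_right (hineq x hxI)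
          positivity
        have hmul : G x ^ ((p-1)/p) * G x ^ (1/p - 1) = 1 := by
          rw [← Real.rpow_add hGx, show (p-1)/p + (1/p-1) = 0 by field_simp; ring, Real.rpow_zero]
        have h2 : (p * φ x * G x ^ ((p-1)/p)) * ((1/p) * G x ^ (1/p - 1)) = φ x := by
          calc (p * φ x * G x ^ ((p-1)/p)) * ((1/p) * G x ^ (1/p - 1))
              = φ x * (G x ^ ((p-1)/p) * G x ^ (1/p - 1)) * (p * (1/p)) := by ring
            _ = φ x := by rw [hmul, mul_one, mul_one_div, div_self hp0.ne', mul_one]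
        calc G' x * (1/p) * G x ^ (1/p - 1)
            = G' x * ((1/p) * G x ^ (1/p - 1)) := by ring
          _ ≤ _ := h1
          _ = φ x := h2
      linarith
  intro t ht
  have h0 : (0:ℝ) ∈ Set.Icc (0:ℝ) T := ⟨le_refl 0, hT.le⟩
  have := hmono h0 ht ht.1
  simp only [hH, intervalIntegral.integral_same, zero_sub] at this
  linarith
end

section
/- Let Ω ⊂ ℝⁿ be an open, bounded, connected set with Lipschitz boundary, let d_{I*} > 0, β > 0, γ > 0, δ > 0, ν ≥ 0, and let S̃* : Ω̄ → ℝ be continuous, bounded, and positive. Define λ*(S̃*) := −inf{ ∫_Ω ( d_{I*}|∇φ|² + ((γ+ν+δ) − βS̃*)φ² ) dx : φ admissible with ∫_Ω φ² dx = 1 } and R₀* := sup{ ∫_Ω βS̃* φ² dx / ∫_Ω ( d_{I*}|∇φ|² + (γ+ν+δ)φ² ) dx : φ admissible }. Then R₀* − 1 and λ*(S̃*) have the same sign: λ*(S̃*) > 0 if and only if R₀* > 1, λ*(S̃*) = 0 if and only if R₀* = 1, and λ*(S̃*) < 0 if and only if R₀* < 1. -/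
open MeasureTheory Set Filter Topology

/-- The spatial Laplacian of `f : ℝⁿ → ℝ`, as the sum of second partial derivatives. -/
noncomputable def Lap {n : ℕ} (f : EuclideanSpace ℝ (Fin n) → ℝ)
    (x : EuclideanSpace ℝ (Fin n)) : ℝ :=
  ∑ i : Fin n, fderiv ℝ (fun y => fderiv ℝ f y (EuclideanSpace.single i 1)) x
    (EuclideanSpace.single i 1)

/-- The sup-norm `‖g‖_∞ = sup_{x ∈ Ω̄} |g x|` over the closure of `Ω`. -/
noncomputable def supN {n : ℕ} (Ω : Set (EuclideanSpace ℝ (Fin n)))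
    (g : EuclideanSpace ℝ (Fin n) → ℝ) : ℝ :=
  ⨆ x : closure Ω, |g x|

/-- Classical regularity on the time interval `J`: for each `t ∈ J`, `u (·,t) ∈ C²(Ω) ∩ C(Ω̄)`,
and for each `x ∈ Ω̄`, `u (x,·)` is continuously differentiable on `J`. -/
def ClassicalOn {n : ℕ} (Ω : Set (EuclideanSpace ℝ (Fin n)))
    (u : EuclideanSpace ℝ (Fin n) → ℝ → ℝ) (J : Set ℝ) : Prop :=
  (∀ t ∈ J, ContDiffOn ℝ 2 (fun x => u x t) Ω ∧ ContinuousOn (fun x => u x t) (closure Ω)) ∧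
  ∀ x ∈ closure Ω, ContDiffOn ℝ 1 (fun s => u x s) J

/-- Zero-flux (homogeneous Neumann) boundary condition: for each `t ∈ J`, the spatial
gradient of `u (·,t)` vanishes at every point of `∂Ω`. -/
def ZeroFlux {n : ℕ} (Ω : Set (EuclideanSpace ℝ (Fin n)))
    (u : EuclideanSpace ℝ (Fin n) → ℝ → ℝ) (J : Set ℝ) : Prop :=
  ∀ t ∈ J, ∀ x ∈ frontier Ω, gradient (fun y => u y t) x = 0

/-- The admissible test class: continuously differentiable `φ` with
`0 < ∫_Ω φ² < ∞` and `∫_Ω |∇φ|² < ∞`. -/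
def AdmissibleTest {n : ℕ} (Ω : Set (EuclideanSpace ℝ (Fin n)))
    (φ : EuclideanSpace ℝ (Fin n) → ℝ) : Prop :=
  ContDiffOn ℝ 1 φ Ω ∧ IntegrableOn (fun x => φ x ^ 2) Ω ∧
  0 < (∫ x in Ω, φ x ^ 2) ∧ IntegrableOn (fun x => ‖gradient φ x‖ ^ 2) Ω

/-- The principal eigenvalue `λ` of `dc Δ + (w - κ)` with Neumann boundary conditions,
via its variational characterization. -/
noncomputable def principalEig {n : ℕ} (Ω : Set (EuclideanSpace ℝ (Fin n)))
    (dc κ : ℝ) (w : EuclideanSpace ℝ (Fin n) → ℝ) : ℝ :=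
  -sInf {r : ℝ | ∃ φ : EuclideanSpace ℝ (Fin n) → ℝ, AdmissibleTest Ω φ ∧
    (∫ x in Ω, φ x ^ 2) = 1 ∧
    r = ∫ x in Ω, (dc * ‖gradient φ x‖ ^ 2 + (κ - w x) * φ x ^ 2)}

/-- The basic reproduction number associated to the weight `w`, damping `κ` and
diffusion `dc`, via its variational characterization. -/
noncomputable def reproNumber {n : ℕ} (Ω : Set (EuclideanSpace ℝ (Fin n)))
    (dc κ : ℝ) (w : EuclideanSpace ℝ (Fin n) → ℝ) : ℝ :=
  sSup {r : ℝ | ∃ φ : EuclideanSpace ℝ (Fin n) → ℝ, AdmissibleTest Ω φ ∧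
    r = (∫ x in Ω, w x * φ x ^ 2) /
      (∫ x in Ω, (dc * ‖gradient φ x‖ ^ 2 + κ * φ x ^ 2))}

lemma grad_const_mul {n : ℕ} (c : ℝ) (f : EuclideanSpace ℝ (Fin n) → ℝ)
    (x : EuclideanSpace ℝ (Fin n)) (hf : DifferentiableAt ℝ f x) :
    gradient (fun y => c * f y) x = c • gradient f x := by
  unfold gradient
  rw [fderiv_const_mul hf]
  simp

lemma perPhi {n : ℕ} (Ω : Set (EuclideanSpace ℝ (Fin n))) (hΩopen : IsOpen Ω)
    (dc κ : ℝ) (hdc : 0 < dc) (hκ : 0 < κ)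
    (w : EuclideanSpace ℝ (Fin n) → ℝ) (hwcont : ContinuousOn w Ω)
    (M : ℝ) (hwpos : ∀ x ∈ Ω, 0 < w x) (hwM : ∀ x ∈ Ω, w x ≤ M)
    (φ : EuclideanSpace ℝ (Fin n) → ℝ) (hφ : AdmissibleTest Ω φ) :
    IntegrableOn (fun x => w x * φ x ^ 2) Ω ∧
    (∫ x in Ω, (dc * ‖gradient φ x‖ ^ 2 + (κ - w x) * φ x ^ 2))
      = (∫ x in Ω, (dc * ‖gradient φ x‖ ^ 2 + κ * φ x ^ 2)) - (∫ x in Ω, w x * φ x ^ 2) ∧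
    κ * (∫ x in Ω, φ x ^ 2) ≤ (∫ x in Ω, (dc * ‖gradient φ x‖ ^ 2 + κ * φ x ^ 2)) ∧
    0 < (∫ x in Ω, (dc * ‖gradient φ x‖ ^ 2 + κ * φ x ^ 2)) ∧
    0 ≤ (∫ x in Ω, w x * φ x ^ 2) ∧
    (∫ x in Ω, w x * φ x ^ 2) ≤ M * (∫ x in Ω, φ x ^ 2) := by
  obtain ⟨h1, h2, h3, h4⟩ := hφ
  have hMS : MeasurableSet Ω := hΩopen.measurableSet
  have hwmeas : AEStronglyMeasurable w (volume.restrict Ω) :=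
    hwcont.aestronglyMeasurable hMS
  have hint : IntegrableOn (fun x => w x * φ x ^ 2) Ω := by
    refine Integrable.bdd_mul (c := M) h2 hwmeas ((ae_restrict_mem hMS).mono fun x hx => ?_)
    rw [Real.norm_eq_abs, abs_of_pos (hwpos x hx)]
    exact hwM x hx
  have hgi : IntegrableOn (fun x => dc * ‖gradient φ x‖ ^ 2) Ω := h4.const_mul _
  have hpi : IntegrableOn (fun x => κ * φ x ^ 2) Ω := h2.const_mul _
  have hG0 : 0 ≤ ∫ x in Ω, ‖gradient φ x‖ ^ 2 :=
    setIntegral_nonneg hMS fun x _ => by positivity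
  have hD : (∫ x in Ω, (dc * ‖gradient φ x‖ ^ 2 + κ * φ x ^ 2))
      = dc * (∫ x in Ω, ‖gradient φ x‖ ^ 2) + κ * (∫ x in Ω, φ x ^ 2) := by
    rw [integral_add hgi hpi, integral_const_mul, integral_const_mul]
  have hE : (∫ x in Ω, (dc * ‖gradient φ x‖ ^ 2 + (κ - w x) * φ x ^ 2))
      = (∫ x in Ω, (dc * ‖gradient φ x‖ ^ 2 + κ * φ x ^ 2)) - (∫ x in Ω, w x * φ x ^ 2) := by
    have heq : (fun x => dc * ‖gradient φ x‖ ^ 2 + (κ - w x) * φ x ^ 2)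
        = fun x => (dc * ‖gradient φ x‖ ^ 2 + κ * φ x ^ 2) - w x * φ x ^ 2 := by
      funext x; ring
    have hDi : IntegrableOn (fun x => dc * ‖gradient φ x‖ ^ 2 + κ * φ x ^ 2) Ω := hgi.add hpi
    rw [heq, integral_sub hDi hint]
  have hκND : κ * (∫ x in Ω, φ x ^ 2) ≤ ∫ x in Ω, (dc * ‖gradient φ x‖ ^ 2 + κ * φ x ^ 2) := by
    rw [hD]; nlinarith [mul_nonneg hdc.le hG0]
  have hDpos : 0 < ∫ x in Ω, (dc * ‖gradient φ x‖ ^ 2 + κ * φ x ^ 2) :=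
    lt_of_lt_of_le (mul_pos hκ h3) hκND
  have hW0 : 0 ≤ ∫ x in Ω, w x * φ x ^ 2 :=
    setIntegral_nonneg hMS fun x hx => mul_nonneg (hwpos x hx).le (sq_nonneg _)
  have hWle : (∫ x in Ω, w x * φ x ^ 2) ≤ M * (∫ x in Ω, φ x ^ 2) := by
    rw [← integral_const_mul M (fun x => φ x ^ 2)]
    exact setIntegral_mono_on hint (h2.const_mul M) hMS
      (fun x hx => mul_le_mul_of_nonneg_right (hwM x hx) (sq_nonneg _))
  exact ⟨hint, hE, hκND, hDpos, hW0, hWle⟩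

lemma const_admissible {n : ℕ} (Ω : Set (EuclideanSpace ℝ (Fin n))) (hΩopen : IsOpen Ω)
    (hΩbdd : Bornology.IsBounded Ω) (hne : Ω.Nonempty) :
    ∃ φ : EuclideanSpace ℝ (Fin n) → ℝ, AdmissibleTest Ω φ ∧ (∫ x in Ω, φ x ^ 2) = 1 := by
  set V := (volume Ω).toReal with hV
  have hVpos : 0 < V :=
    ENNReal.toReal_pos (hΩopen.measure_pos volume hne).ne' hΩbdd.measure_lt_top.ne
  refine ⟨fun _ => Real.sqrt V⁻¹, ?_, ?_⟩
  · refine ⟨contDiffOn_const, integrableOn_const hΩbdd.measure_lt_top.ne, ?_, ?_⟩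
    · rw [setIntegral_const, smul_eq_mul, Real.sq_sqrt (inv_nonneg.2 hVpos.le), measureReal_def, ← hV,
        mul_inv_cancel₀ hVpos.ne']
      exact one_pos
    · have hz : (fun x => ‖gradient (fun _ : EuclideanSpace ℝ (Fin n) => Real.sqrt V⁻¹) x‖ ^ 2)
          = fun _ => (0 : ℝ) := by
        funext x
        rw [gradient_fun_const]
        simp
      rw [hz]
      exact integrableOn_zero
  · rw [setIntegral_const, smul_eq_mul, Real.sq_sqrt (inv_nonneg.2 hVpos.le), measureReal_def, ← hV,
      mul_inv_cancel₀ hVpos.ne']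

lemma normalizePhi {n : ℕ} (Ω : Set (EuclideanSpace ℝ (Fin n))) (hΩopen : IsOpen Ω)
    (dc κ : ℝ) (w : EuclideanSpace ℝ (Fin n) → ℝ)
    (φ : EuclideanSpace ℝ (Fin n) → ℝ) (hφ : AdmissibleTest Ω φ) :
    ∃ ψ, AdmissibleTest Ω ψ ∧ (∫ x in Ω, ψ x ^ 2) = 1 ∧
      (∫ x in Ω, w x * ψ x ^ 2) / (∫ x in Ω, (dc * ‖gradient ψ x‖ ^ 2 + κ * ψ x ^ 2))
        = (∫ x in Ω, w x * φ x ^ 2) / (∫ x in Ω, (dc * ‖gradient φ x‖ ^ 2 + κ * φ x ^ 2)) := by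
  obtain ⟨h1, h2, h3, h4⟩ := hφ
  have hMS : MeasurableSet Ω := hΩopen.measurableSet
  set a : ℝ := Real.sqrt (∫ x in Ω, φ x ^ 2)⁻¹ with ha
  have ha2 : a ^ 2 = (∫ x in Ω, φ x ^ 2)⁻¹ := Real.sq_sqrt (inv_nonneg.2 h3.le)
  have hapos : 0 < a := Real.sqrt_pos.2 (inv_pos.2 h3)
  refine ⟨fun x => a * φ x, ?_, ?_, ?_⟩
  case _ =>
    -- admissibility
    have hψ2 : (fun x => (a * φ x) ^ 2) = fun x => a ^ 2 * φ x ^ 2 := by funext x; ring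
    have hψ2int : IntegrableOn (fun x => (a * φ x) ^ 2) Ω := by
      rw [hψ2]; exact h2.const_mul _
    refine ⟨contDiffOn_const.mul h1, hψ2int, ?_, ?_⟩
    · rw [hψ2, integral_const_mul, ha2, inv_mul_cancel₀ h3.ne']
      exact one_pos
    · have h4' : IntegrableOn (fun x => a ^ 2 * ‖gradient φ x‖ ^ 2) Ω := h4.const_mul _
      refine h4'.congr_fun (fun x hx => ?_) hMS
      have hdiff : DifferentiableAt ℝ φ x :=
        (h1.differentiableOn one_ne_zero).differentiableAt (hΩopen.mem_nhds hx)
      rw [grad_const_mul a φ x hdiff, norm_smul, mul_pow, Real.norm_eq_abs, sq_abs]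
  case _ =>
    have hψ2 : (fun x => (a * φ x) ^ 2) = fun x => a ^ 2 * φ x ^ 2 := by funext x; ring
    rw [hψ2, integral_const_mul, ha2, inv_mul_cancel₀ h3.ne']
  case _ =>
    have hW : (∫ x in Ω, w x * (a * φ x) ^ 2) = a ^ 2 * ∫ x in Ω, w x * φ x ^ 2 := by
      rw [← integral_const_mul]
      congr 1
      funext x; ring
    have hD : (∫ x in Ω, (dc * ‖gradient (fun y => a * φ y) x‖ ^ 2 + κ * (a * φ x) ^ 2))
        = a ^ 2 * ∫ x in Ω, (dc * ‖gradient φ x‖ ^ 2 + κ * φ x ^ 2) := by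
      rw [← integral_const_mul]
      refine setIntegral_congr_fun hMS (fun x hx => ?_)
      have hdiff : DifferentiableAt ℝ φ x :=
        (h1.differentiableOn one_ne_zero).differentiableAt (hΩopen.mem_nhds hx)
      rw [grad_const_mul a φ x hdiff, norm_smul, mul_pow, Real.norm_eq_abs, sq_abs]
      ring
    rw [hW, hD, mul_div_mul_left _ _ (by positivity : a ^ 2 ≠ 0)]

theorem signAux {n : ℕ} (Ω : Set (EuclideanSpace ℝ (Fin n))) (hΩopen : IsOpen Ω)
    (hΩbdd : Bornology.IsBounded Ω) (hne : Ω.Nonempty)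
    (dc κ : ℝ) (hdc : 0 < dc) (hκ : 0 < κ)
    (w : EuclideanSpace ℝ (Fin n) → ℝ) (hwcont : ContinuousOn w Ω)
    (M : ℝ) (hM : 0 < M) (hwpos : ∀ x ∈ Ω, 0 < w x) (hwM : ∀ x ∈ Ω, w x ≤ M) :
    (0 < principalEig Ω dc κ w ↔ 1 < reproNumber Ω dc κ w) ∧
    (principalEig Ω dc κ w = 0 ↔ reproNumber Ω dc κ w = 1) ∧
    (principalEig Ω dc κ w < 0 ↔ reproNumber Ω dc κ w < 1) := by
  classical
  set A : Set ℝ := {r : ℝ | ∃ φ : EuclideanSpace ℝ (Fin n) → ℝ, AdmissibleTest Ω φ ∧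
    (∫ x in Ω, φ x ^ 2) = 1 ∧
    r = ∫ x in Ω, (dc * ‖gradient φ x‖ ^ 2 + (κ - w x) * φ x ^ 2)} with hAdef
  set B : Set ℝ := {r : ℝ | ∃ φ : EuclideanSpace ℝ (Fin n) → ℝ, AdmissibleTest Ω φ ∧
    r = (∫ x in Ω, w x * φ x ^ 2) /
      (∫ x in Ω, (dc * ‖gradient φ x‖ ^ 2 + κ * φ x ^ 2))} with hBdef
  have hLam : principalEig Ω dc κ w = -sInf A := rfl
  have hR : reproNumber Ω dc κ w = sSup B := rfl
  have pp := fun φ hφ => perPhi Ω hΩopen dc κ hdc hκ w hwcont M hwpos hwM φ hφ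
  -- nonemptiness
  obtain ⟨φ₀, hφ₀, hφ₀N⟩ := const_admissible Ω hΩopen hΩbdd hne
  have hAne : A.Nonempty := ⟨_, φ₀, hφ₀, hφ₀N, rfl⟩
  have hBne : B.Nonempty := ⟨_, φ₀, hφ₀, rfl⟩
  -- bounds
  have hAbdd : BddBelow A := by
    refine ⟨κ - M, fun e he => ?_⟩
    obtain ⟨φ, hφ, hN, he⟩ := he
    obtain ⟨hint, hE, hκND, hDpos, hW0, hWle⟩ := pp φ hφ
    rw [hN] at hκND hWle
    rw [he, hE]
    linarith
  have hBdd : BddAbove B := by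
    refine ⟨M / κ, fun r hr => ?_⟩
    obtain ⟨φ, hφ, hr⟩ := hr
    obtain ⟨hint, hE, hκND, hDpos, hW0, hWle⟩ := pp φ hφ
    have hNpos := hφ.2.2.1
    rw [hr]
    calc (∫ x in Ω, w x * φ x ^ 2) / (∫ x in Ω, (dc * ‖gradient φ x‖ ^ 2 + κ * φ x ^ 2))
        ≤ (M * (∫ x in Ω, φ x ^ 2)) / (κ * (∫ x in Ω, φ x ^ 2)) := by
          apply div_le_div₀ (by positivity) hWle (by positivity) hκND
      _ = M / κ := by
          rw [mul_comm M _, mul_comm κ _, mul_div_mul_left _ _ hNpos.ne']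
  -- F1 : 0 ≤ sInf A ↔ sSup B ≤ 1
  have F1 : 0 ≤ sInf A ↔ sSup B ≤ 1 := by
    constructor
    · intro h
      refine csSup_le hBne (fun r hr => ?_)
      obtain ⟨φ, hφ, hr⟩ := hr
      obtain ⟨ψ, hψ, hψN, hψr⟩ := normalizePhi Ω hΩopen dc κ w φ hφ
      obtain ⟨hint, hE, hκND, hDpos, hW0, hWle⟩ := pp ψ hψ
      have heA : (∫ x in Ω, (dc * ‖gradient ψ x‖ ^ 2 + (κ - w x) * ψ x ^ 2)) ∈ A :=
        ⟨ψ, hψ, hψN, rfl⟩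
      have h0 : (0:ℝ) ≤ ∫ x in Ω, (dc * ‖gradient ψ x‖ ^ 2 + (κ - w x) * ψ x ^ 2) :=
        le_trans h (csInf_le hAbdd heA)
      rw [hE] at h0
      rw [hr, ← hψr, div_le_one hDpos]
      linarith
    · intro h
      refine le_csInf hAne (fun e he => ?_)
      obtain ⟨φ, hφ, hN, he⟩ := he
      obtain ⟨hint, hE, hκND, hDpos, hW0, hWle⟩ := pp φ hφ
      have hrB : (∫ x in Ω, w x * φ x ^ 2) /
          (∫ x in Ω, (dc * ‖gradient φ x‖ ^ 2 + κ * φ x ^ 2)) ∈ B := ⟨φ, hφ, rfl⟩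
      have hr1 := le_trans (le_csSup hBdd hrB) h
      rw [div_le_one hDpos] at hr1
      rw [he, hE]
      linarith
  -- F2 : 0 < sInf A ↔ sSup B < 1
  have F2 : 0 < sInf A ↔ sSup B < 1 := by
    constructor
    · intro h
      set m := sInf A with hm
      have hbound : sSup B ≤ max (1/2) (1 - m / (2 * M)) := by
        refine csSup_le hBne (fun r hr => ?_)
        obtain ⟨φ, hφ, hr⟩ := hr
        obtain ⟨ψ, hψ, hψN, hψr⟩ := normalizePhi Ω hΩopen dc κ w φ hφ
        obtain ⟨hint, hE, hκND, hDpos, hW0, hWle⟩ := pp ψ hψ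
        rw [hψN, mul_one] at hκND hWle
        set W := ∫ x in Ω, w x * ψ x ^ 2
        set D := ∫ x in Ω, (dc * ‖gradient ψ x‖ ^ 2 + κ * ψ x ^ 2)
        have heA : (∫ x in Ω, (dc * ‖gradient ψ x‖ ^ 2 + (κ - w x) * ψ x ^ 2)) ∈ A :=
          ⟨ψ, hψ, hψN, rfl⟩
        have hem : m ≤ D - W := by
          rw [hm]
          refine le_trans (csInf_le hAbdd heA) (le_of_eq ?_)
          exact hE
        rw [hr, ← hψr]
        rcases le_total D (2 * M) with hD2 | hD2
        · refine le_trans ?_ (le_max_right _ _)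
          rw [div_le_iff₀ hDpos]
          have h2M : (0:ℝ) < 2 * M := by positivity
          have ht : m / (2 * M) * (2 * M) = m := div_mul_cancel₀ m h2M.ne'
          have htD : m / (2 * M) * D ≤ m := by
            calc m / (2 * M) * D ≤ m / (2 * M) * (2 * M) :=
              mul_le_mul_of_nonneg_left hD2 (by positivity)
            _ = m := ht
          nlinarith
        · refine le_trans ?_ (le_max_left _ _)
          rw [div_le_iff₀ hDpos]
          linarith
      refine lt_of_le_of_lt hbound (max_lt (by norm_num) ?_)
      have : 0 < m / (2 * M) := by positivity
      linarith
    · intro h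
      set s := sSup B with hs
      have hlow : (1 - s) * κ ≤ sInf A := by
        refine le_csInf hAne (fun e he => ?_)
        obtain ⟨φ, hφ, hN, he⟩ := he
        obtain ⟨hint, hE, hκND, hDpos, hW0, hWle⟩ := pp φ hφ
        rw [hN, mul_one] at hκND
        have hrB : (∫ x in Ω, w x * φ x ^ 2) /
            (∫ x in Ω, (dc * ‖gradient φ x‖ ^ 2 + κ * φ x ^ 2)) ∈ B := ⟨φ, hφ, rfl⟩
        have hrs := le_csSup hBdd hrB
        rw [div_le_iff₀ hDpos] at hrs
        rw [he, hE]
        nlinarith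
      have : 0 < (1 - s) * κ := mul_pos (by linarith) hκ
      linarith
  -- assembly
  rw [hLam, hR]
  refine ⟨?_, ?_, ?_⟩
  · rw [neg_pos, ← not_le, ← not_le]
    exact not_congr F1
  · rw [neg_eq_zero]
    constructor
    · intro h
      have h1 : sSup B ≤ 1 := F1.1 (le_of_eq h.symm)
      have h2 : ¬ sSup B < 1 := fun hc => absurd (F2.2 hc) (by rw [h]; exact lt_irrefl 0)
      exact le_antisymm h1 (not_lt.1 h2)
    · intro h
      have h1 : 0 ≤ sInf A := F1.2 (le_of_eq h)
      have h2 : ¬ 0 < sInf A := fun hc => absurd (F2.1 hc) (by rw [h]; exact lt_irrefl 1)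
      exact le_antisymm (not_lt.1 h2) h1
  · rw [neg_lt_zero]
    exact F2

theorem R0star_sign_eq_eigenvalue_sign {n : ℕ} (hn : 1 ≤ n) (Ω : Set (EuclideanSpace ℝ (Fin n)))
    (hΩopen : IsOpen Ω) (hΩbdd : Bornology.IsBounded Ω) (hΩconn : IsConnected Ω)
    (dIs' β γ δ ν : ℝ) (hdIs : 0 < dIs') (hβ : 0 < β) (hγ : 0 < γ) (hδ : 0 < δ) (hν : 0 ≤ ν)
    (St : EuclideanSpace ℝ (Fin n) → ℝ) (hStcont : ContinuousOn St (closure Ω))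
    (hStbdd : ∃ C : ℝ, ∀ x ∈ closure Ω, |St x| ≤ C)
    (hStpos : ∀ x ∈ closure Ω, 0 < St x) :
    (0 < principalEig Ω dIs' (γ + ν + δ) (fun x => β * St x) ↔
      1 < reproNumber Ω dIs' (γ + ν + δ) (fun x => β * St x)) ∧
    (principalEig Ω dIs' (γ + ν + δ) (fun x => β * St x) = 0 ↔
      reproNumber Ω dIs' (γ + ν + δ) (fun x => β * St x) = 1) ∧
    (principalEig Ω dIs' (γ + ν + δ) (fun x => β * St x) < 0 ↔
      reproNumber Ω dIs' (γ + ν + δ) (fun x => β * St x) < 1) := by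
  obtain ⟨C, hC⟩ := hStbdd
  obtain ⟨x₀, hx₀⟩ := hΩconn.nonempty
  have hC0 : 0 ≤ C := le_trans (abs_nonneg _) (hC x₀ (subset_closure hx₀))
  exact signAux Ω hΩopen hΩbdd ⟨x₀, hx₀⟩ dIs' (γ + ν + δ) hdIs (by linarith)
    (fun x => β * St x) (continuousOn_const.mul (hStcont.mono subset_closure))
    (β * C + 1) (by nlinarith)
    (fun x hx => mul_pos hβ (hStpos x (subset_closure hx)))
    (fun x hx => by
      have h1 := hC x (subset_closure hx)
      have h2 := le_abs_self (St x)
      show β * St x ≤ β * C + 1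
      nlinarith)
end

section
/- Let Ω ⊂ ℝⁿ be an open, bounded, connected set with Lipschitz boundary, let d_I > 0, β > 0, γ > 0, δ > 0, α ∈ [0,1], and let S̃ : Ω̄ → ℝ be continuous, bounded, and positive. Define λ(S̃) := −inf{ ∫_Ω ( d_I|∇φ|² + ((γ+δ) − β(1−α)²S̃)φ² ) dx : φ admissible with ∫_Ω φ² dx = 1 } and R₀ := sup{ ∫_Ω β(1−α)² S̃ φ² dx / ∫_Ω ( d_I|∇φ|² + (γ+δ)φ² ) dx : φ admissible }. Then R₀ − 1 and λ(S̃) have the same sign: λ(S̃) > 0 if and only if R₀ > 1, λ(S̃) = 0 if and only if R₀ = 1, and λ(S̃) < 0 if and only if R₀ < 1. -/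
open MeasureTheory Set Filter Topology

set_option maxHeartbeats 1000000

lemma grad_const_mul_s13 {F : Type*} [NormedAddCommGroup F] [InnerProductSpace ℝ F]
    [CompleteSpace F] {f : F → ℝ} {a : ℝ} (ha : a ≠ 0) (x : F) :
    gradient (fun y => a * f y) x = a • gradient f x := by
  by_cases h : DifferentiableAt ℝ f x
  · unfold gradient
    rw [fderiv_const_mul h a, _root_.map_smul]
  · have h2 : ¬ DifferentiableAt ℝ (fun y => a * f y) x := by
      intro hd
      have := hd.const_mul a⁻¹
      simp only [← mul_assoc, inv_mul_cancel₀ ha, one_mul] at this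
      exact h this
    rw [gradient_eq_zero_of_not_differentiableAt h,
      gradient_eq_zero_of_not_differentiableAt h2, smul_zero]

theorem R0_sign_eq_eigenvalue_sign {n : ℕ} (hn : 1 ≤ n) (Ω : Set (EuclideanSpace ℝ (Fin n)))
    (hΩopen : IsOpen Ω) (hΩbdd : Bornology.IsBounded Ω) (hΩconn : IsConnected Ω)
    (dI β γ δ α : ℝ) (hdI : 0 < dI) (hβ : 0 < β) (hγ : 0 < γ) (hδ : 0 < δ)
    (hα : α ∈ Set.Icc (0:ℝ) 1)
    (St : EuclideanSpace ℝ (Fin n) → ℝ) (hStcont : ContinuousOn St (closure Ω))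
    (hStbdd : ∃ C : ℝ, ∀ x ∈ closure Ω, |St x| ≤ C)
    (hStpos : ∀ x ∈ closure Ω, 0 < St x) :
    (0 < principalEig Ω dI (γ + δ) (fun x => β * (1 - α) ^ 2 * St x) ↔
      1 < reproNumber Ω dI (γ + δ) (fun x => β * (1 - α) ^ 2 * St x)) ∧
    (principalEig Ω dI (γ + δ) (fun x => β * (1 - α) ^ 2 * St x) = 0 ↔
      reproNumber Ω dI (γ + δ) (fun x => β * (1 - α) ^ 2 * St x) = 1) ∧
    (principalEig Ω dI (γ + δ) (fun x => β * (1 - α) ^ 2 * St x) < 0 ↔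
      reproNumber Ω dI (γ + δ) (fun x => β * (1 - α) ^ 2 * St x) < 1) := by
  
  obtain ⟨C0, hC0⟩ := hStbdd
  set w : EuclideanSpace ℝ (Fin n) → ℝ := fun x => β * (1 - α) ^ 2 * St x with hwdef
  set κ : ℝ := γ + δ with hκdef
  set M : ℝ := β * (1 - α) ^ 2 * C0 with hMdef
  have hκ : 0 < κ := by rw [hκdef]; linarith
  have hcoef : 0 ≤ β * (1 - α) ^ 2 := by positivity
  have hw0 : ∀ x ∈ Ω, 0 ≤ w x := fun x hx =>
    mul_nonneg hcoef (hStpos x (subset_closure hx)).le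
  have hwM : ∀ x ∈ Ω, w x ≤ M :=
    fun x hx => mul_le_mul_of_nonneg_left
      ((le_abs_self _).trans (hC0 x (subset_closure hx))) hcoef
  have hΩne : Ω.Nonempty := hΩconn.nonempty
  have hM0 : 0 ≤ M := by
    obtain ⟨x0, hx0⟩ := hΩne
    exact (hw0 x0 hx0).trans (hwM x0 hx0)
  have hΩmeas : MeasurableSet Ω := hΩopen.measurableSet
  have hwmeas : AEStronglyMeasurable w (volume.restrict Ω) :=
    (continuousOn_const.mul (hStcont.mono subset_closure)).aestronglyMeasurable hΩmeas
  set Sset : Set ℝ := {r : ℝ | ∃ φ : EuclideanSpace ℝ (Fin n) → ℝ, AdmissibleTest Ω φ ∧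
    (∫ x in Ω, φ x ^ 2) = 1 ∧
    r = ∫ x in Ω, (dI * ‖gradient φ x‖ ^ 2 + (κ - w x) * φ x ^ 2)} with hSdef
  set Tset : Set ℝ := {r : ℝ | ∃ φ : EuclideanSpace ℝ (Fin n) → ℝ, AdmissibleTest Ω φ ∧
    r = (∫ x in Ω, w x * φ x ^ 2) /
      (∫ x in Ω, (dI * ‖gradient φ x‖ ^ 2 + κ * φ x ^ 2))} with hTdef
  have hP : principalEig Ω dI κ w = -sInf Sset := rfl
  have hR : reproNumber Ω dI κ w = sSup Tset := rfl
  rw [hP, hR]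
  -- integral splitting for admissible test functions
  have hsplit : ∀ φ : EuclideanSpace ℝ (Fin n) → ℝ, AdmissibleTest Ω φ →
      IntegrableOn (fun x => w x * φ x ^ 2) Ω ∧
      (∫ x in Ω, (dI * ‖gradient φ x‖ ^ 2 + (κ - w x) * φ x ^ 2)) =
        dI * (∫ x in Ω, ‖gradient φ x‖ ^ 2) + κ * (∫ x in Ω, φ x ^ 2)
          - (∫ x in Ω, w x * φ x ^ 2) ∧
      (∫ x in Ω, (dI * ‖gradient φ x‖ ^ 2 + κ * φ x ^ 2)) =
        dI * (∫ x in Ω, ‖gradient φ x‖ ^ 2) + κ * (∫ x in Ω, φ x ^ 2) ∧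
      0 ≤ (∫ x in Ω, ‖gradient φ x‖ ^ 2) ∧
      0 ≤ (∫ x in Ω, w x * φ x ^ 2) ∧
      (∫ x in Ω, w x * φ x ^ 2) ≤ M * (∫ x in Ω, φ x ^ 2) := by
    rintro φ ⟨hφ1, hφ2, hφ3, hφ4⟩
    have hwφ : IntegrableOn (fun x => w x * φ x ^ 2) Ω := by
      refine Integrable.mono' (hφ2.const_mul M) (hwmeas.mul hφ2.aestronglyMeasurable) ?_
      filter_upwards [ae_restrict_mem hΩmeas] with x hx
      have h1 : ‖w x * φ x ^ 2‖ = w x * φ x ^ 2 := by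
        rw [Real.norm_eq_abs, abs_of_nonneg (mul_nonneg (hw0 x hx) (sq_nonneg _))]
      rw [h1]
      exact mul_le_mul_of_nonneg_right (hwM x hx) (sq_nonneg _)
    have hgi : IntegrableOn (fun x => dI * ‖gradient φ x‖ ^ 2) Ω := hφ4.const_mul dI
    have hki : IntegrableOn (fun x => κ * φ x ^ 2) Ω := hφ2.const_mul κ
    refine ⟨hwφ, ?_, ?_, ?_, ?_, ?_⟩
    · have e1 : (∫ x in Ω, (dI * ‖gradient φ x‖ ^ 2 + (κ - w x) * φ x ^ 2))
          = ∫ x in Ω, ((dI * ‖gradient φ x‖ ^ 2 + κ * φ x ^ 2) - w x * φ x ^ 2) :=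
            integral_congr_ae (Eventually.of_forall fun x => by ring)
      have e2 : (∫ x in Ω, ((dI * ‖gradient φ x‖ ^ 2 + κ * φ x ^ 2) - w x * φ x ^ 2))
          = (∫ x in Ω, (dI * ‖gradient φ x‖ ^ 2 + κ * φ x ^ 2))
            - ∫ x in Ω, w x * φ x ^ 2 := integral_sub (hgi.add hki) hwφ
      rw [e1, e2, integral_add hgi hki, integral_const_mul, integral_const_mul]
    · rw [integral_add hgi hki, integral_const_mul, integral_const_mul]
    · exact integral_nonneg fun x => by positivity
    · exact setIntegral_nonneg hΩmeas fun x hx => mul_nonneg (hw0 x hx) (sq_nonneg _)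
    · rw [← integral_const_mul]
      exact setIntegral_mono_on hwφ (hφ2.const_mul M) hΩmeas
        fun x hx => mul_le_mul_of_nonneg_right (hwM x hx) (sq_nonneg _)
  -- the key membership lemma
  have hmem : ∀ φ : EuclideanSpace ℝ (Fin n) → ℝ, AdmissibleTest Ω φ →
      ∃ G B c : ℝ, 0 ≤ G ∧ 0 < c ∧ 0 ≤ B ∧ B ≤ M * c ∧ 0 < dI * G + κ * c ∧
        ((dI * G + κ * c - B) / c ∈ Sset) ∧ (B / (dI * G + κ * c) ∈ Tset) ∧
        (∫ x in Ω, φ x ^ 2) = c ∧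
        (∫ x in Ω, (dI * ‖gradient φ x‖ ^ 2 + (κ - w x) * φ x ^ 2)) = dI * G + κ * c - B ∧
        (∫ x in Ω, w x * φ x ^ 2) /
          (∫ x in Ω, (dI * ‖gradient φ x‖ ^ 2 + κ * φ x ^ 2)) = B / (dI * G + κ * c) := by
    intro φ hφ
    obtain ⟨hwφ, hv1, hv2, hG0, hB0, hBM⟩ := hsplit φ hφ
    obtain ⟨hφ1, hφ2, hφ3, hφ4⟩ := hφ
    refine ⟨∫ x in Ω, ‖gradient φ x‖ ^ 2, ∫ x in Ω, w x * φ x ^ 2, ∫ x in Ω, φ x ^ 2,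
      hG0, hφ3, hB0, hBM, by positivity, ?_, ⟨φ, ⟨hφ1, hφ2, hφ3, hφ4⟩, by rw [hv2]⟩,
      rfl, by rw [hv1], by rw [hv2]⟩
    -- S-membership via normalization
    set G := ∫ x in Ω, ‖gradient φ x‖ ^ 2
    set B := ∫ x in Ω, w x * φ x ^ 2
    set c := ∫ x in Ω, φ x ^ 2 with hcdef
    have hc : 0 < c := hφ3
    set a : ℝ := (Real.sqrt c)⁻¹ with hadef
    have ha : 0 < a := by positivity
    have ha2 : a ^ 2 = c⁻¹ := by
      rw [hadef, inv_pow, Real.sq_sqrt hc.le]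
    set ψ : EuclideanSpace ℝ (Fin n) → ℝ := fun x => a * φ x with hψdef
    have hψsq : ∀ x, ψ x ^ 2 = a ^ 2 * φ x ^ 2 := fun x => by rw [hψdef]; ring
    have hψg : ∀ x, ‖gradient ψ x‖ ^ 2 = a ^ 2 * ‖gradient φ x‖ ^ 2 := by
      intro x
      rw [hψdef, grad_const_mul_s13 ha.ne', norm_smul, Real.norm_eq_abs, mul_pow, sq_abs]
    have hψ2int : IntegrableOn (fun x => ψ x ^ 2) Ω := by
      have : (fun x => ψ x ^ 2) = fun x => a ^ 2 * φ x ^ 2 := funext hψsq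
      rw [this]; exact hφ2.const_mul _
    have hψ2 : (∫ x in Ω, ψ x ^ 2) = 1 := by
      simp only [hψsq]
      rw [integral_const_mul, ha2, ← hcdef, inv_mul_cancel₀ hc.ne']
    have hψgint : IntegrableOn (fun x => ‖gradient ψ x‖ ^ 2) Ω := by
      have : (fun x => ‖gradient ψ x‖ ^ 2) = fun x => a ^ 2 * ‖gradient φ x‖ ^ 2 :=
        funext hψg
      rw [this]; exact hφ4.const_mul _
    have hψadm : AdmissibleTest Ω ψ :=
      ⟨contDiffOn_const.mul hφ1, hψ2int, by rw [hψ2]; norm_num, hψgint⟩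
    obtain ⟨hwψ, hw1, hw2, _, _, _⟩ := hsplit ψ hψadm
    have hGψ : (∫ x in Ω, ‖gradient ψ x‖ ^ 2) = a ^ 2 * G := by
      simp only [hψg]; rw [integral_const_mul]
    have hBψ : (∫ x in Ω, w x * ψ x ^ 2) = a ^ 2 * B := by
      have : (fun x => w x * ψ x ^ 2) = fun x => a ^ 2 * (w x * φ x ^ 2) := by
        funext x; rw [hψsq]; ring
      rw [this, integral_const_mul]
    refine ⟨ψ, hψadm, hψ2, ?_⟩
    rw [hw1, hGψ, hψ2, hBψ, ha2]
    field_simp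
  -- reformulations of membership
  have hS : ∀ r ∈ Sset, ∃ G B : ℝ, 0 ≤ G ∧ 0 ≤ B ∧ B ≤ M ∧ 0 < dI * G + κ ∧
      r = dI * G + κ - B ∧ B / (dI * G + κ) ∈ Tset := by
    rintro r ⟨φ, hφ, hφn, hr⟩
    obtain ⟨G, B, c, hG, hc, hB0, hBM, hD, _, hTm, hceq, hval, _⟩ := hmem φ hφ
    have hc1 : c = 1 := by rw [← hceq, hφn]
    rw [hc1] at hBM hD hTm
    rw [mul_one] at hBM hD hTm
    exact ⟨G, B, hG, hB0, hBM, hD, by rw [hr, hval, hc1, mul_one], hTm⟩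
  have hT : ∀ t ∈ Tset, ∃ G B c : ℝ, 0 ≤ G ∧ 0 < c ∧ 0 ≤ B ∧ B ≤ M * c ∧
      0 < dI * G + κ * c ∧ t = B / (dI * G + κ * c) ∧
      (dI * G + κ * c - B) / c ∈ Sset := by
    rintro t ⟨φ, hφ, ht⟩
    obtain ⟨G, B, c, hG, hc, hB0, hBM, hD, hSm, _, _, _, hratio⟩ := hmem φ hφ
    exact ⟨G, B, c, hG, hc, hB0, hBM, hD, by rw [ht, hratio], hSm⟩
  -- nonemptiness and boundedness
  have hadm1 : AdmissibleTest Ω (fun _ => (1 : ℝ)) := by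
    refine ⟨contDiffOn_const, ?_, ?_, ?_⟩
    · simp only [one_pow]
      exact (integrableOn_const hΩbdd.measure_lt_top.ne)
    · simp only [one_pow]
      rw [setIntegral_const, smul_eq_mul, mul_one]
      exact ENNReal.toReal_pos (hΩopen.measure_pos volume hΩne).ne' hΩbdd.measure_lt_top.ne
    · have : (fun x : EuclideanSpace ℝ (Fin n) => ‖gradient (fun _ => (1:ℝ)) x‖ ^ 2)
          = fun _ => 0 := by
        funext x; rw [gradient_fun_const]; simp
      rw [this]
      exact integrableOn_zero
  have hSne : Sset.Nonempty := by
    obtain ⟨G, B, c, _, _, _, _, _, hSm, _, _, _, _⟩ := hmem _ hadm1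
    exact ⟨_, hSm⟩
  have hTne : Tset.Nonempty := by
    obtain ⟨G, B, c, _, _, _, _, _, _, hTm, _, _, _⟩ := hmem _ hadm1
    exact ⟨_, hTm⟩
  have hSbb : BddBelow Sset := by
    refine ⟨κ - M, fun r hr => ?_⟩
    obtain ⟨G, B, hG, hB0, hBM, hD, hval, _⟩ := hS r hr
    have : 0 ≤ dI * G := mul_nonneg hdI.le hG
    linarith [hval]
  have hTba : BddAbove Tset := by
    refine ⟨M / κ, fun t ht => ?_⟩
    obtain ⟨G, B, c, hG, hc, hB0, hBM, hD, hval, _⟩ := hT t ht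
    rw [hval, div_le_div_iff₀ hD hκ]
    have h1 : 0 ≤ dI * G := mul_nonneg hdI.le hG
    nlinarith [mul_nonneg hM0 h1]
  -- the two strict-sign equivalences
  have E1 : sInf Sset < 0 ↔ 1 < sSup Tset := by
    rw [csInf_lt_iff hSbb hSne, lt_csSup_iff hTba hTne]
    constructor
    · rintro ⟨r, hrS, hr0⟩
      obtain ⟨G, B, hG, hB0, hBM, hD, hval, hTm⟩ := hS r hrS
      exact ⟨_, hTm, (one_lt_div hD).mpr (by linarith [hval.symm.trans_lt hr0])⟩
    · rintro ⟨t, htT, ht1⟩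
      obtain ⟨G, B, c, hG, hc, hB0, hBM, hD, hval, hSm⟩ := hT t htT
      refine ⟨_, hSm, div_neg_of_neg_of_pos ?_ hc⟩
      rw [hval, one_lt_div hD] at ht1
      linarith
  have E3 : 0 < sInf Sset ↔ sSup Tset < 1 := by
    constructor
    · intro hs
      have hub : ∀ t ∈ Tset, t ≤ 1 - sInf Sset / (sInf Sset + M) := by
        intro t ht
        obtain ⟨G, B, c, hG, hc, hB0, hBM, hD, hval, hSm⟩ := hT t ht
        have hrs : sInf Sset ≤ (dI * G + κ * c - B) / c := csInf_le hSbb hSm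
        have hrc : sInf Sset * c ≤ dI * G + κ * c - B := (le_div_iff₀ hc).mp hrs
        have hsM : 0 < sInf Sset + M := by linarith
        have h1 : (1 : ℝ) - sInf Sset / (sInf Sset + M) = M / (sInf Sset + M) := by
          field_simp
          ring
        rw [hval, h1, div_le_div_iff₀ hD hsM]
        nlinarith [mul_le_mul_of_nonneg_left hrc hM0,
          mul_le_mul_of_nonneg_right hBM hs.le]
      have hle : sSup Tset ≤ 1 - sInf Sset / (sInf Sset + M) := csSup_le hTne hub
      have hpos : 0 < sInf Sset / (sInf Sset + M) := div_pos hs (by linarith)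
      linarith
    · intro ht
      refine lt_of_lt_of_le (show (0:ℝ) < κ * (1 - sSup Tset) from
        mul_pos hκ (by linarith)) (le_csInf hSne fun r hr => ?_)
      obtain ⟨G, B, hG, hB0, hBM, hD, hval, hTm⟩ := hS r hr
      have htle : B / (dI * G + κ) ≤ sSup Tset := le_csSup hTba hTm
      have hB : B ≤ sSup Tset * (dI * G + κ) := by rwa [div_le_iff₀ hD] at htle
      rw [hval]
      have h1 : 0 ≤ dI * G := mul_nonneg hdI.le hG
      nlinarith [mul_nonneg (show (0:ℝ) ≤ 1 - sSup Tset by linarith) h1]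
  refine ⟨?_, ?_, ?_⟩
  · rw [neg_pos]; exact E1
  · constructor
    · intro h0
      have hs0 : sInf Sset = 0 := by linarith [neg_eq_zero.mp h0]
      have h1 : ¬ (1 < sSup Tset) := fun h => absurd (E1.mpr h) (by rw [hs0]; exact lt_irrefl 0)
      have h2 : ¬ (sSup Tset < 1) := fun h => absurd (E3.mpr h) (by rw [hs0]; exact lt_irrefl 0)
      exact le_antisymm (not_lt.mp h1) (not_lt.mp h2)
    · intro h1
      have h2 : ¬ (sInf Sset < 0) := fun h => absurd (E1.mp h) (by rw [h1]; exact lt_irrefl 1)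
      have h3 : ¬ (0 < sInf Sset) := fun h => absurd (E3.mp h) (by rw [h1]; exact lt_irrefl 1)
      have : sInf Sset = 0 := le_antisymm (not_lt.mp h3) (not_lt.mp h2)
      rw [this, neg_zero]
  · rw [neg_lt_zero]; exact E3
end
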